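/- For real a with 0 < a ≤ 2, the sequence (1/(2n)) · log D_{2n}(a) converges as n → ∞ to log 2. -/

import Mathlib

open Filter

/-- The adsorbing Dyck path partition function `D_{2n}(a)` for real `a`. -/
noncomputable def dyckPF (n : ℕ) (a : ℝ) : ℝ :=
  ∑ ℓ ∈ Finset.range (n + 1),
    ((2 * ℓ + 1 : ℝ) / (n + ℓ + 1)) * (Nat.choose (2 * n) (n + ℓ) : ℝ) * (a - 1) ^ ℓ

section Aux
open Finset

/-- Hockey-stick convolution: `∑_{k=0}^{N} C(k,j) C(N-k,r) = C(N+1, j+r+1)`. -/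
lemma conv_choose : ∀ (N j r : ℕ),
    ∑ k ∈ range (N+1), Nat.choose k j * Nat.choose (N-k) r = Nat.choose (N+1) (j+r+1) := by
  intro N
  induction N with
  | zero =>
      intro j r
      match j, r with
      | 0, 0 => simp
      | 0, r+1 => simp [Nat.choose_eq_zero_of_lt]
      | j+1, r => simp [Nat.choose_eq_zero_of_lt (by omega : (1:ℕ) < j+1+r+1)]
  | succ N ih =>
      intro j r
      rw [Finset.sum_range_succ]
      cases r with
      | zero =>
          have h1 : ∑ k ∈ range (N+1), Nat.choose k j * Nat.choose (N+1-k) 0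
              = ∑ k ∈ range (N+1), Nat.choose k j * Nat.choose (N-k) 0 := by
            apply Finset.sum_congr rfl
            intro k _
            simp [Nat.choose_zero_right]
          rw [h1, ih j 0]
          simp only [Nat.sub_self, Nat.choose_zero_right, mul_one]
          have := Nat.choose_succ_succ (N+1) j
          simp only [Nat.succ_eq_add_one] at this
          simp only [Nat.add_zero]
          omega
      | succ s =>
          have h1 : ∑ k ∈ range (N+1), Nat.choose k j * Nat.choose (N+1-k) (s+1)
              = ∑ k ∈ range (N+1), (Nat.choose k j * Nat.choose (N-k) s
                  + Nat.choose k j * Nat.choose (N-k) (s+1)) := by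
            apply Finset.sum_congr rfl
            intro k hk
            rw [mem_range] at hk
            have hNk : N+1-k = (N-k)+1 := by omega
            rw [hNk, Nat.choose_succ_succ, Nat.mul_add]
          rw [h1, Finset.sum_add_distrib, ih j s, ih j (s+1)]
          rw [Nat.sub_self]
          have h2 : Nat.choose 0 (s+1) = 0 := Nat.choose_eq_zero_of_lt (by omega)
          rw [h2, mul_zero, add_zero]
          have h3 := Nat.choose_succ_succ (N+1) (j+s+1)
          have h4 : j + (s+1) + 1 = j + s + 1 + 1 := by omega
          rw [h4, h3]

/-- Step A: telescoping form of the coefficients. -/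
lemma dyckPF_eq_tel (m : ℕ) (a : ℝ) :
    dyckPF (m+1) a = ∑ ℓ ∈ range (m+2),
      ((Nat.choose (2*m+2) (m+1+ℓ) : ℝ) - (Nat.choose (2*m+2) (m+2+ℓ) : ℝ)) * (a-1) ^ ℓ := by
  unfold dyckPF
  apply Finset.sum_congr rfl
  intro ℓ hl
  rw [mem_range] at hl
  congr 1
  have key := Nat.choose_succ_right_eq (2*(m+1)) (m+1+ℓ)
  have hsub : 2*(m+1) - (m+1+ℓ) = m+1-ℓ := by omega
  rw [hsub] at key
  have keyR : (Nat.choose (2*m+2) (m+2+ℓ) : ℝ) * ((m:ℝ)+1+ℓ+1)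
      = (Nat.choose (2*m+2) (m+1+ℓ) : ℝ) * ((m:ℝ)+1-ℓ) := by
    have h2 : 2*(m+1) = 2*m+2 := by ring
    have h3 : m+1+ℓ+1 = m+2+ℓ := by omega
    rw [h2, h3] at key
    have := congrArg (fun x : ℕ => (x : ℝ)) key
    push_cast [Nat.cast_sub (by omega : ℓ ≤ m+1)] at this
    push_cast
    linarith [this]
  have hden : ((m:ℝ)+1+ℓ+1) ≠ 0 := by positivity
  have h4 : ((m+1:ℕ):ℝ) + (ℓ:ℝ) + 1 = (m:ℝ)+1+ℓ+1 := by push_cast; ring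
  rw [h4, show 2*(m+1) = 2*m+2 from by ring, div_mul_eq_mul_div, div_eq_iff hden]
  nlinarith [keyR]

/-- Step B: the positive-coefficient form. -/
lemma dyckPF_eq_sum (m : ℕ) (a : ℝ) :
    dyckPF (m+1) a = ∑ k ∈ range (m+2),
      ((Nat.choose (2*m+1-k) m : ℝ) - (Nat.choose (2*m+1-k) (m+1) : ℝ)) * a ^ k := by
  rw [dyckPF_eq_tel]
  symm
  have hpow : ∀ k ∈ range (m+2), ((Nat.choose (2*m+1-k) m : ℝ) - (Nat.choose (2*m+1-k) (m+1) : ℝ)) * a ^ k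
      = ∑ j ∈ range (m+2), ((Nat.choose (2*m+1-k) m : ℝ) - (Nat.choose (2*m+1-k) (m+1) : ℝ))
          * ((Nat.choose k j : ℝ) * (a-1) ^ j) := by
    intro k hk
    rw [mem_range] at hk
    rw [← Finset.mul_sum]
    congr 1
    have h1 : a ^ k = ((a-1) + 1) ^ k := by ring_nf
    rw [h1, add_pow]
    rw [← Finset.sum_subset (Finset.range_subset_range.mpr (by omega : k+1 ≤ m+2))]
    · apply Finset.sum_congr rfl
      intro j hj
      simp only [one_pow, mul_one]
      ring
    · intro j hj hj'
      rw [mem_range] at hj hj'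
      rw [Nat.choose_eq_zero_of_lt (by omega : k < j)]
      simp
  rw [Finset.sum_congr rfl hpow, Finset.sum_comm]
  apply Finset.sum_congr rfl
  intro j hj
  rw [mem_range] at hj
  have hterm : ∀ k ∈ range (m+2),
      ((Nat.choose (2*m+1-k) m : ℝ) - (Nat.choose (2*m+1-k) (m+1) : ℝ))
        * ((Nat.choose k j : ℝ) * (a-1) ^ j)
      = (((Nat.choose k j * Nat.choose (2*m+1-k) m : ℕ) : ℝ)
          - ((Nat.choose k j * Nat.choose (2*m+1-k) (m+1) : ℕ) : ℝ)) * (a-1) ^ j := by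
    intro k _
    push_cast
    ring
  rw [Finset.sum_congr rfl hterm, ← Finset.sum_mul]
  congr 1
  rw [Finset.sum_sub_distrib]
  have inner : ∀ r : ℕ, m ≤ r →
      ∑ k ∈ range (m+2), Nat.choose k j * Nat.choose (2*m+1-k) r = Nat.choose (2*m+2) (j+r+1) := by
    intro r hr
    have hzero : ∀ k ∈ range (2*m+1+1), k ∉ range (m+2) →
        Nat.choose k j * Nat.choose (2*m+1-k) r = 0 := by
      intro k hk hk'
      rw [mem_range] at hk hk'
      rw [Nat.choose_eq_zero_of_lt (by omega : 2*m+1-k < r), mul_zero]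
    calc ∑ k ∈ range (m+2), Nat.choose k j * Nat.choose (2*m+1-k) r
        = ∑ k ∈ range (2*m+1+1), Nat.choose k j * Nat.choose (2*m+1-k) r :=
          Finset.sum_subset (Finset.range_subset_range.mpr (by omega)) hzero
      _ = Nat.choose (2*m+1+1) (j+r+1) := conv_choose (2*m+1) j r
      _ = Nat.choose (2*m+2) (j+r+1) := by norm_num
  have i1 := inner m le_rfl
  have i2 := inner (m+1) (by omega)
  have c1 : (∑ k ∈ range (m+2), ((Nat.choose k j * Nat.choose (2*m+1-k) m : ℕ) : ℝ))
      = ((Nat.choose (2*m+2) (j+m+1) : ℕ) : ℝ) := by exact_mod_cast congrArg (fun x : ℕ => (x:ℝ)) i1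
  have c2 : (∑ k ∈ range (m+2), ((Nat.choose k j * Nat.choose (2*m+1-k) (m+1) : ℕ) : ℝ))
      = ((Nat.choose (2*m+2) (j+m+2) : ℕ) : ℝ) := by
    have h5 : j + (m+1) + 1 = j+m+2 := by omega
    rw [h5] at i2
    exact_mod_cast congrArg (fun x : ℕ => (x:ℝ)) i2
  rw [c1, c2]
  have h6 : j+m+1 = m+1+j := by omega
  have h7 : j+m+2 = m+2+j := by omega
  rw [h6, h7]

lemma rho_nonneg (m k : ℕ) : Nat.choose (2*m+1-k) (m+1) ≤ Nat.choose (2*m+1-k) m := by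
  have key := Nat.choose_succ_right_eq (2*m+1-k) m
  have h2 : Nat.choose (2*m+1-k) (m+1) * (m+1) ≤ Nat.choose (2*m+1-k) m * (m+1) := by
    rw [key]
    exact Nat.mul_le_mul le_rfl (by omega)
  exact Nat.le_of_mul_le_mul_right h2 (by omega)

lemma choose_le_four_pow (n j : ℕ) : Nat.choose (2*n) j ≤ 4 ^ n := by
  calc Nat.choose (2*n) j ≤ ∑ i ∈ range (2*n+1), Nat.choose (2*n) i := by
        by_cases h : j < 2*n+1
        · exact Finset.single_le_sum (fun i _ => Nat.zero_le _) (mem_range.mpr h)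
        · rw [Nat.choose_eq_zero_of_lt (by omega)]; exact Nat.zero_le _
    _ = 2 ^ (2*n) := Nat.sum_range_choose (2*n)
    _ = 4 ^ n := by rw [pow_mul]; norm_num

lemma four_pow_le' (m : ℕ) : 4 ^ m ≤ 2*(m+1) * Nat.choose (2*m) m := by
  cases m with
  | zero => norm_num
  | succ m =>
      calc 4 ^ (m+1) ≤ 2*(m+1) * Nat.centralBinom (m+1) :=
            Nat.four_pow_le_two_mul_self_mul_centralBinom (m+1) (by omega)
        _ ≤ 2*(m+2) * Nat.centralBinom (m+1) := by
            apply Nat.mul_le_mul _ le_rfl; omega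
        _ = 2*(m+1+1) * Nat.choose (2*(m+1)) (m+1) := by
            rw [Nat.centralBinom_eq_two_mul_choose]

lemma dyckPF_lower (m : ℕ) (a : ℝ) (h0 : 0 < a) :
    (Nat.choose (2*m) m : ℝ) / (m+1) * a ≤ dyckPF (m+1) a := by
  rw [dyckPF_eq_sum]
  have hnn : ∀ k ∈ range (m+2),
      0 ≤ ((Nat.choose (2*m+1-k) m : ℝ) - (Nat.choose (2*m+1-k) (m+1) : ℝ)) * a ^ k := by
    intro k _
    apply mul_nonneg
    · rw [sub_nonneg]
      exact_mod_cast rho_nonneg m k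
    · positivity
  have h1 : ((Nat.choose (2*m+1-1) m : ℝ) - (Nat.choose (2*m+1-1) (m+1) : ℝ)) * a ^ 1
      ≤ ∑ k ∈ range (m+2),
        ((Nat.choose (2*m+1-k) m : ℝ) - (Nat.choose (2*m+1-k) (m+1) : ℝ)) * a ^ k :=
    Finset.single_le_sum hnn (mem_range.mpr (by omega))
  refine le_trans (le_of_eq ?_) h1
  have h : (2*m+1-1) = 2*m := by omega
  rw [h, pow_one]
  have key := Nat.choose_succ_right_eq (2*m) m
  have hs : 2*m - m = m := by omega
  rw [hs] at key
  have keyR : (Nat.choose (2*m) (m+1) : ℝ) * ((m:ℝ)+1) = (Nat.choose (2*m) m : ℝ) * m := by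
    exact_mod_cast congrArg (fun x : ℕ => (x:ℝ)) key
  have hm1 : ((m:ℝ)+1) ≠ 0 := by positivity
  rw [div_mul_eq_mul_div, eq_comm, eq_div_iff hm1]
  nlinarith [keyR]

lemma dyckPF_upper (n : ℕ) (a : ℝ) (h0 : 0 < a) (h2 : a ≤ 2) :
    dyckPF n a ≤ ((n:ℝ)+1) * 4 ^ n := by
  unfold dyckPF
  have hbound : ∀ ℓ ∈ range (n+1),
      ((2 * ℓ + 1 : ℝ) / (n + ℓ + 1)) * (Nat.choose (2 * n) (n + ℓ) : ℝ) * (a - 1) ^ ℓ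
        ≤ (4:ℝ) ^ n := by
    intro ℓ hl
    rw [mem_range] at hl
    have hden : (0:ℝ) < (n:ℝ) + ℓ + 1 := by positivity
    have hc : ((2 * ℓ + 1 : ℝ) / ((n:ℝ) + ℓ + 1)) ≤ 1 := by
      rw [div_le_one hden]
      have : (ℓ:ℝ) ≤ (n:ℝ) := by exact_mod_cast Nat.lt_succ_iff.mp hl
      linarith
    have hc0 : (0:ℝ) ≤ ((2 * ℓ + 1 : ℝ) / ((n:ℝ) + ℓ + 1)) := by positivity
    have hC : (Nat.choose (2*n) (n+ℓ) : ℝ) ≤ (4:ℝ) ^ n := by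
      exact_mod_cast choose_le_four_pow n (n+ℓ)
    have hC0 : (0:ℝ) ≤ (Nat.choose (2*n) (n+ℓ) : ℝ) := by positivity
    have ht : |a - 1| ≤ 1 := abs_le.mpr ⟨by linarith, by linarith⟩
    have htp : (a-1) ^ ℓ ≤ 1 := by
      calc (a-1) ^ ℓ ≤ |(a-1) ^ ℓ| := le_abs_self _
        _ = |a-1| ^ ℓ := abs_pow _ _
        _ ≤ 1 ^ ℓ := pow_le_pow_left₀ (abs_nonneg _) ht ℓ
        _ = 1 := one_pow ℓ
    have htp0 : -1 ≤ (a-1) ^ ℓ := by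
      have : -(1:ℝ) ≤ -|(a-1)^ℓ| := by
        rw [abs_pow]
        simp only [neg_le_neg_iff]
        calc |a-1| ^ ℓ ≤ 1 ^ ℓ := pow_le_pow_left₀ (abs_nonneg _) ht ℓ
          _ = 1 := one_pow ℓ
      linarith [neg_abs_le ((a-1)^ℓ)]
    have s1 : ((2 * ℓ + 1 : ℝ) / ((n:ℝ) + ℓ + 1)) * (Nat.choose (2*n) (n+ℓ) : ℝ) * (a - 1) ^ ℓ
        ≤ ((2 * ℓ + 1 : ℝ) / ((n:ℝ) + ℓ + 1)) * (Nat.choose (2*n) (n+ℓ) : ℝ) * 1 :=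
      mul_le_mul_of_nonneg_left htp (mul_nonneg hc0 hC0)
    have s2 : ((2 * ℓ + 1 : ℝ) / ((n:ℝ) + ℓ + 1)) * (Nat.choose (2*n) (n+ℓ) : ℝ)
        ≤ 1 * (Nat.choose (2*n) (n+ℓ) : ℝ) := mul_le_mul_of_nonneg_right hc hC0
    calc ((2 * ℓ + 1 : ℝ) / ((n:ℝ) + ℓ + 1)) * (Nat.choose (2*n) (n+ℓ) : ℝ) * (a - 1) ^ ℓ
        ≤ ((2 * ℓ + 1 : ℝ) / ((n:ℝ) + ℓ + 1)) * (Nat.choose (2*n) (n+ℓ) : ℝ) * 1 := s1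
      _ = ((2 * ℓ + 1 : ℝ) / ((n:ℝ) + ℓ + 1)) * (Nat.choose (2*n) (n+ℓ) : ℝ) := mul_one _
      _ ≤ 1 * (Nat.choose (2*n) (n+ℓ) : ℝ) := s2
      _ = (Nat.choose (2*n) (n+ℓ) : ℝ) := one_mul _
      _ ≤ (4:ℝ) ^ n := hC
  calc (∑ ℓ ∈ Finset.range (n + 1),
      ((2 * ℓ + 1 : ℝ) / (n + ℓ + 1)) * (Nat.choose (2 * n) (n + ℓ) : ℝ) * (a - 1) ^ ℓ)
      ≤ ∑ _ℓ ∈ Finset.range (n+1), (4:ℝ) ^ n := Finset.sum_le_sum hbound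
    _ = ((n:ℝ)+1) * 4 ^ n := by rw [Finset.sum_const]; simp [nsmul_eq_mul]

lemma dyckPF_lower' (m : ℕ) (a : ℝ) (h0 : 0 < a) :
    (4:ℝ)^m / (2*((m:ℝ)+1)^2) * a ≤ dyckPF (m+1) a := by
  refine le_trans ?_ (dyckPF_lower m a h0)
  apply mul_le_mul_of_nonneg_right _ h0.le
  have h4 : (4:ℝ)^m ≤ 2*((m:ℝ)+1) * (Nat.choose (2*m) m : ℝ) := by
    exact_mod_cast four_pow_le' m
  rw [div_le_div_iff₀ (by positivity) (by positivity)]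
  nlinarith [h4, sq_nonneg ((m:ℝ)+1)]


end Aux

theorem dyckPF_free_energy_desorbed (a : ℝ) (ha0 : 0 < a) (ha2 : a ≤ 2) :
    Tendsto (fun n : ℕ => (1 / (2 * n : ℝ)) * Real.log (dyckPF n a)) atTop
      (nhds (Real.log 2)) := by
  have hlog4 : Real.log 4 = 2 * Real.log 2 := by
    rw [show (4:ℝ) = 2^2 by norm_num, Real.log_pow]
    push_cast; ring
  have h2top : Tendsto (fun n : ℕ => 2*(n:ℝ)) atTop atTop :=
    Tendsto.const_mul_atTop (by norm_num) tendsto_natCast_atTop_atTop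
  have hinv : Tendsto (fun n : ℕ => 1/(2*(n:ℝ))) atTop (nhds 0) := by
    exact Tendsto.congr (fun n => by simp [one_div]) h2top.inv_tendsto_atTop
  have hlogn : Tendsto (fun n : ℕ => Real.log n / (n:ℝ)) atTop (nhds 0) := by
    have h := Real.isLittleO_log_id_atTop.tendsto_div_nhds_zero
    have := h.comp tendsto_natCast_atTop_atTop
    exact this
  -- the two bounding sequences
  set L : ℕ → ℝ := fun n =>
    (1/(2*(n:ℝ))) * (Real.log a + ((n:ℝ)-1)*Real.log 4 - Real.log 2 - 2*Real.log n) with hL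
  set U : ℕ → ℝ := fun n =>
    (1/(2*(n:ℝ))) * (Real.log 2 + Real.log n + (n:ℝ)*Real.log 4) with hU
  have hLlim : Tendsto L atTop (nhds (Real.log 2)) := by
    have hG : Tendsto (fun n : ℕ =>
        (Real.log a - Real.log 2 - Real.log 4)*(1/(2*(n:ℝ))) + Real.log 4/2 - Real.log n/(n:ℝ))
        atTop (nhds ((Real.log a - Real.log 2 - Real.log 4)*0 + Real.log 4/2 - 0)) :=
      ((hinv.const_mul _).add tendsto_const_nhds).sub hlogn
    have hval : (Real.log a - Real.log 2 - Real.log 4)*0 + Real.log 4/2 - 0 = Real.log 2 := by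
      rw [hlog4]; ring
    rw [hval] at hG
    apply hG.congr'
    filter_upwards [eventually_ge_atTop 1] with n hn
    have hne : (n:ℝ) ≠ 0 := by
      have : (1:ℝ) ≤ (n:ℝ) := by exact_mod_cast hn
      linarith
    rw [hL]
    field_simp
    ring
  have hUlim : Tendsto U atTop (nhds (Real.log 2)) := by
    have hG : Tendsto (fun n : ℕ =>
        Real.log 2*(1/(2*(n:ℝ))) + (Real.log n/(n:ℝ))*(1/2) + Real.log 4/2)
        atTop (nhds (Real.log 2*0 + 0*(1/2) + Real.log 4/2)) :=
      ((hinv.const_mul _).add (hlogn.mul_const _)).add tendsto_const_nhds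
    have hval : Real.log 2*0 + 0*(1/2) + Real.log 4/2 = Real.log 2 := by
      rw [hlog4]; ring
    rw [hval] at hG
    apply hG.congr'
    filter_upwards [eventually_ge_atTop 1] with n hn
    have hne : (n:ℝ) ≠ 0 := by
      have : (1:ℝ) ≤ (n:ℝ) := by exact_mod_cast hn
      linarith
    rw [hU]
    field_simp
  refine tendsto_of_tendsto_of_tendsto_of_le_of_le' hLlim hUlim ?_ ?_
  · -- lower bound eventually
    filter_upwards [eventually_ge_atTop 1] with n hn
    obtain ⟨m, rfl⟩ : ∃ m, n = m + 1 := ⟨n - 1, by omega⟩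
    have hXpos : (0:ℝ) < (4:ℝ)^m / (2*((m:ℝ)+1)^2) * a := by positivity
    have hXD := dyckPF_lower' m a ha0
    have hlogle : Real.log ((4:ℝ)^m / (2*((m:ℝ)+1)^2) * a) ≤ Real.log (dyckPF (m+1) a) :=
      Real.log_le_log hXpos hXD
    have hlogX : Real.log ((4:ℝ)^m / (2*((m:ℝ)+1)^2) * a)
        = Real.log a + (m:ℝ)*Real.log 4 - Real.log 2 - 2*Real.log ((m:ℝ)+1) := by
      rw [Real.log_mul (by positivity) (ne_of_gt ha0),
        Real.log_div (by positivity) (by positivity),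
        Real.log_pow, Real.log_mul (by norm_num) (by positivity), Real.log_pow]
      push_cast; ring
    have hinner : Real.log a + (((m+1:ℕ):ℝ)-1)*Real.log 4 - Real.log 2 - 2*Real.log ((m+1:ℕ):ℝ)
        ≤ Real.log (dyckPF (m+1) a) := by
      have : Real.log a + (((m+1:ℕ):ℝ)-1)*Real.log 4 - Real.log 2 - 2*Real.log ((m+1:ℕ):ℝ)
          = Real.log a + (m:ℝ)*Real.log 4 - Real.log 2 - 2*Real.log ((m:ℝ)+1) := by
        push_cast; ring
      rw [this, ← hlogX]
      exact hlogle
    rw [hL]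
    exact mul_le_mul_of_nonneg_left hinner (by positivity)
  · -- upper bound eventually
    filter_upwards [eventually_ge_atTop 1] with n hn
    obtain ⟨m, rfl⟩ : ∃ m, n = m + 1 := ⟨n - 1, by omega⟩
    have hXpos : (0:ℝ) < (4:ℝ)^m / (2*((m:ℝ)+1)^2) * a := by positivity
    have hDpos : (0:ℝ) < dyckPF (m+1) a := lt_of_lt_of_le hXpos (dyckPF_lower' m a ha0)
    have hub : dyckPF (m+1) a ≤ 2*((m+1:ℕ):ℝ) * 4^(m+1) := by
      refine le_trans (dyckPF_upper (m+1) a ha0 ha2) ?_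
      have h1 : ((m+1:ℕ):ℝ) + 1 ≤ 2*((m+1:ℕ):ℝ) := by push_cast; linarith
      exact mul_le_mul_of_nonneg_right h1 (by positivity)
    have hlogle : Real.log (dyckPF (m+1) a) ≤ Real.log (2*((m+1:ℕ):ℝ) * 4^(m+1)) :=
      Real.log_le_log hDpos hub
    have hlogB : Real.log (2*((m+1:ℕ):ℝ) * 4^(m+1))
        = Real.log 2 + Real.log ((m+1:ℕ):ℝ) + ((m+1:ℕ):ℝ)*Real.log 4 := by
      rw [Real.log_mul (by positivity) (by positivity),
        Real.log_mul (by norm_num) (by positivity), Real.log_pow]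
      try push_cast
      try ring
    rw [hU]
    refine mul_le_mul_of_nonneg_left ?_ (by positivity)
    rw [← hlogB]
    exact hlogle
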